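/- Ky Fan's maximum principle: if S is a real symmetric m×m matrix with eigenvalues θ_1 ≥ ... ≥ θ_m, and P is any orthogonal projection (symmetric idempotent matrix) of rank k, then tr(P S) ≤ θ_1 + ... + θ_k. -/

import Mathlib

open Matrix Finset

lemma card_filter_lt_fin (m k : ℕ) (hkm : k ≤ m) :
    (Finset.univ.filter (fun i : Fin m => (i : ℕ) < k)).card = k := by
  have h : (Finset.univ.filter (fun i : Fin m => (i : ℕ) < k))
      = Finset.image (Fin.castLE hkm) Finset.univ := by
    ext i
    simp only [mem_filter, mem_univ, true_and, mem_image]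
    constructor
    · intro h; exact ⟨⟨i, h⟩, rfl⟩
    · rintro ⟨j, rfl⟩; exact j.2
  rw [h, Finset.card_image_of_injective _ (Fin.castLE_injective hkm), card_univ,
    Fintype.card_fin]

lemma kyfan_sum (m k : ℕ) (hk1 : 1 ≤ k) (hkm : k ≤ m)
    (θ : Fin m → ℝ) (hθ : Antitone θ)
    (q : Fin m → ℝ) (h0 : ∀ i, 0 ≤ q i) (h1 : ∀ i, q i ≤ 1)
    (hsum : ∑ i, q i = (k : ℝ)) :
    ∑ i, θ i * q i ≤ ∑ i ∈ Finset.univ.filter (fun i : Fin m => (i : ℕ) < k), θ i := by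
  have hkm' : k - 1 < m := lt_of_lt_of_le (Nat.sub_lt hk1 one_pos) hkm
  set j : Fin m := ⟨k - 1, hkm'⟩ with hj
  set t := θ j with ht
  have key : ∑ i, (θ i - t) * q i
      ≤ ∑ i ∈ Finset.univ.filter (fun i : Fin m => (i : ℕ) < k), (θ i - t) := by
    rw [← Finset.sum_filter_add_sum_filter_not Finset.univ (fun i : Fin m => (i : ℕ) < k)]
    have h2 : ∑ i ∈ Finset.univ.filter (fun i : Fin m => ¬ (i : ℕ) < k), (θ i - t) * q i ≤ 0 := by
      apply Finset.sum_nonpos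
      intro i hi
      simp only [mem_filter, mem_univ, true_and, not_lt] at hi
      have hji : j ≤ i := by rw [Fin.le_def]; simp only [hj]; omega
      have : θ i ≤ t := hθ hji
      exact mul_nonpos_of_nonpos_of_nonneg (by linarith) (h0 i)
    have h3 : ∑ i ∈ Finset.univ.filter (fun i : Fin m => (i : ℕ) < k), (θ i - t) * q i
        ≤ ∑ i ∈ Finset.univ.filter (fun i : Fin m => (i : ℕ) < k), (θ i - t) := by
      apply Finset.sum_le_sum
      intro i hi
      simp only [mem_filter, mem_univ, true_and] at hi
      have hij : i ≤ j := by rw [Fin.le_def]; simp only [hj]; omega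
      have hti : t ≤ θ i := hθ hij
      nlinarith [h0 i, h1 i]
    linarith
  have hcard := card_filter_lt_fin m k hkm
  have e1 : ∑ i, (θ i - t) * q i = ∑ i, θ i * q i - t * k := by
    simp_rw [sub_mul]
    rw [Finset.sum_sub_distrib, ← Finset.mul_sum, hsum]
  have e2 : ∑ i ∈ Finset.univ.filter (fun i : Fin m => (i : ℕ) < k), (θ i - t)
      = ∑ i ∈ Finset.univ.filter (fun i : Fin m => (i : ℕ) < k), θ i - t * k := by
    rw [Finset.sum_sub_distrib, Finset.sum_const, hcard, nsmul_eq_mul, mul_comm]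
  rw [e1, e2] at key
  linarith

theorem stmt6 (m : ℕ) (S : Matrix (Fin m) (Fin m) ℝ) (hS : S.IsHermitian)
    (θ : Fin m → ℝ) (hθ : Antitone θ)
    (hθeig : ∃ σ : Equiv.Perm (Fin m), ∀ i, θ i = hS.eigenvalues (σ i))
    (k : ℕ) (hk1 : 1 ≤ k) (hkm : k ≤ m)
    (P : Matrix (Fin m) (Fin m) ℝ) (hPsymm : P.IsSymm) (hPidem : P * P = P)
    (hPrank : P.rank = k) :
    Matrix.trace (P * S) ≤ ∑ i ∈ Finset.univ.filter (fun i : Fin m => (i : ℕ) < k), θ i := by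
  classical
  obtain ⟨σ, hσ⟩ := hθeig
  have hP : P.IsHermitian := by
    rw [Matrix.IsHermitian]
    ext i j
    simp [Matrix.conjTranspose_apply, hPsymm.apply]
  -- trace P = k
  have htraceP : Matrix.trace P = (k : ℝ) := by
    set W : Matrix (Fin m) (Fin m) ℝ := (hP.eigenvectorUnitary : Matrix (Fin m) (Fin m) ℝ) with hW
    have hWmem := (hP.eigenvectorUnitary).2
    have hWW : W * star W = 1 := (Matrix.mem_unitaryGroup_iff).mp hWmem
    have hWW' : star W * W = 1 := (Matrix.mem_unitaryGroup_iff').mp hWmem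
    have hdiag : star W * P * W = Matrix.diagonal (RCLike.ofReal ∘ hP.eigenvalues) :=
      hP.conjStarAlgAut_star_eigenvectorUnitary
    -- eigenvalues are 0 or 1
    have hev : ∀ i, hP.eigenvalues i = 0 ∨ hP.eigenvalues i = 1 := by
      intro i
      have hsq : (star W * P * W) * (star W * P * W) = star W * P * W := by
        calc (star W * P * W) * (star W * P * W)
            = star W * P * (W * star W) * P * W := by noncomm_ring
          _ = star W * (P * P) * W := by rw [hWW]; noncomm_ring
          _ = star W * P * W := by rw [hPidem]
      rw [hdiag, Matrix.diagonal_mul_diagonal] at hsq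
      have := congr_fun (congr_fun hsq i) i
      simp only [Matrix.diagonal_apply_eq, Function.comp_apply, Pi.mul_apply] at this
      have h' : hP.eigenvalues i * hP.eigenvalues i = hP.eigenvalues i := by
        exact_mod_cast this
      have hz : hP.eigenvalues i * (hP.eigenvalues i - 1) = 0 := by linear_combination h'
      rcases mul_eq_zero.mp hz with h | h
      · exact Or.inl h
      · exact Or.inr (by linarith)
    have htr : Matrix.trace P = ∑ i, hP.eigenvalues i := by
      have : Matrix.trace (star W * P * W) = Matrix.trace P := by
        rw [Matrix.trace_mul_cycle, hWW, Matrix.one_mul]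
      rw [← this, hdiag, Matrix.trace_diagonal]
      simp
    have hrank : Fintype.card {i // hP.eigenvalues i ≠ 0} = k := by
      rw [← hP.rank_eq_card_non_zero_eigs, hPrank]
    rw [htr, ← Finset.sum_filter_ne_zero]
    have : ∀ i ∈ Finset.univ.filter (fun i => hP.eigenvalues i ≠ 0), hP.eigenvalues i = 1 := by
      intro i hi
      simp only [mem_filter, mem_univ, true_and] at hi
      rcases hev i with h | h
      · exact absurd h hi
      · exact h
    rw [Finset.sum_congr rfl this, Finset.sum_const, nsmul_eq_mul, mul_one,
      ← Fintype.card_subtype, hrank]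
  -- spectral decomposition of S
  set U : Matrix (Fin m) (Fin m) ℝ := (hS.eigenvectorUnitary : Matrix (Fin m) (Fin m) ℝ) with hU
  have hUmem := (hS.eigenvectorUnitary).2
  have hUU : U * star U = 1 := (Matrix.mem_unitaryGroup_iff).mp hUmem
  have hUU' : star U * U = 1 := (Matrix.mem_unitaryGroup_iff').mp hUmem
  set Q : Matrix (Fin m) (Fin m) ℝ := star U * P * U with hQ
  have hQsymm : ∀ i j, Q i j = Q j i := by
    intro i j
    have hstar : star Q = Q := by
      simp only [hQ, Matrix.star_mul, star_star, Matrix.star_eq_conjTranspose, hP.eq]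
      rw [Matrix.conjTranspose_conjTranspose, Matrix.mul_assoc]
    have h2 := congr_fun (congr_fun hstar i) j
    rw [Matrix.star_eq_conjTranspose, Matrix.conjTranspose_apply, star_trivial] at h2
    exact h2.symm
  have hQidem : Q * Q = Q := by
    calc Q * Q = star U * P * (U * star U) * P * U := by rw [hQ]; noncomm_ring
      _ = star U * (P * P) * U := by rw [hUU]; noncomm_ring
      _ = Q := by rw [hPidem, hQ]
  have hq0 : ∀ i, 0 ≤ Q i i := by
    intro i
    have := congr_fun (congr_fun hQidem i) i
    rw [Matrix.mul_apply] at this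
    rw [← this]
    apply Finset.sum_nonneg
    intro j _
    rw [hQsymm j i]
    exact mul_self_nonneg _
  have hq1 : ∀ i, Q i i ≤ 1 := by
    intro i
    have h := congr_fun (congr_fun hQidem i) i
    rw [Matrix.mul_apply] at h
    have hsq : Q i i * Q i i ≤ ∑ j, Q i j * Q j i := by
      have e : Q i i * Q i i = ∑ j ∈ {i}, Q i j * Q j i := by simp
      rw [e]
      apply Finset.sum_le_sum_of_subset_of_nonneg (Finset.subset_univ _)
      intro j _ _
      rw [hQsymm j i]
      exact mul_self_nonneg _
    rw [h] at hsq
    nlinarith [hq0 i]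
  have hqsum : ∑ i, Q i i = (k : ℝ) := by
    have : ∑ i, Q i i = Matrix.trace Q := rfl
    rw [this, hQ, Matrix.trace_mul_cycle, hUU, Matrix.one_mul, htraceP]
  -- trace (P * S) = ∑ i, eigenvalues i * Q i i
  have hdiagS : S = U * Matrix.diagonal (RCLike.ofReal ∘ hS.eigenvalues) * star U :=
    hS.spectral_theorem
  have hofReal : (RCLike.ofReal ∘ hS.eigenvalues : Fin m → ℝ) = hS.eigenvalues := by
    funext i; simp
  have htrPS : Matrix.trace (P * S) = ∑ i, Q i i * hS.eigenvalues i := by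
    conv_lhs => rw [hdiagS]
    rw [show P * (U * Matrix.diagonal (RCLike.ofReal ∘ hS.eigenvalues) * star U)
        = (P * U * Matrix.diagonal (RCLike.ofReal ∘ hS.eigenvalues)) * star U by noncomm_ring,
      Matrix.trace_mul_comm, ← Matrix.mul_assoc, ← Matrix.mul_assoc, ← hQ]
    rw [Matrix.trace]
    congr 1
    funext i
    rw [Matrix.diag_apply, Matrix.mul_diagonal]
    simp
  rw [htrPS]
  -- reindex by σ
  have hre : ∑ i, Q i i * hS.eigenvalues i = ∑ i, θ i * Q (σ i) (σ i) := by
    rw [← Equiv.sum_comp σ (fun i => Q i i * hS.eigenvalues i)]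
    apply Finset.sum_congr rfl
    intro i _
    rw [hσ i, mul_comm]
  rw [hre]
  apply kyfan_sum m k hk1 hkm θ hθ (fun i => Q (σ i) (σ i))
    (fun i => hq0 (σ i)) (fun i => hq1 (σ i))
  rw [Equiv.sum_comp σ (fun i => Q i i)]
  exact hqsum
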